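/- Let G be a chordal graph with simplicial vertex s, and let v₁ v₀ v₂ be a path of G^s such that both edges v₀v₁ and v₀v₂ are collateral and either both or neither of v₁, v₂ belong to N_G(s). If no vertex is simultaneously a witness of v₀v₁ and of v₀v₂, then no witness of v₀v₁ is adjacent in G to any witness of v₀v₂. -/

import Mathlib

/-- The closed neighborhood `N[v]` of a vertex. -/
def closedNbr {V : Type*} (G : SimpleGraph V) (v : V) : Set V := insert v (G.neighborSet v)

/-- A vertex is simplicial if its closed neighborhood is a clique. -/
def Simplicial {V : Type*} (G : SimpleGraph V) (s : V) : Prop := G.IsClique (closedNbr G s)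

/-- A vertex is universal if it is adjacent to all other vertices. -/
def Universal {V : Type*} (G : SimpleGraph V) (v : V) : Prop := ∀ u, u ≠ v → G.Adj v u

/-- The auxiliary graph `G^s` with respect to a simplicial vertex `s`. -/
def auxGraph {V : Type*} (G : SimpleGraph V) (s : V) : SimpleGraph V where
  Adj u v := u ≠ v ∧
    ((u ∉ closedNbr G s ∧ v ∉ closedNbr G s ∧ G.Adj u v) ∨
     (u ∈ closedNbr G s ∧ v ∈ closedNbr G s ∧ G.neighborSet u ∪ G.neighborSet v ≠ Set.univ) ∨
     (u ∈ closedNbr G s ∧ v ∉ closedNbr G s ∧ ¬ closedNbr G v ⊆ closedNbr G u) ∨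
     (v ∈ closedNbr G s ∧ u ∉ closedNbr G s ∧ ¬ closedNbr G u ⊆ closedNbr G v))
  symm := by
    refine ⟨?_⟩
    rintro u v ⟨hne, h⟩
    refine ⟨hne.symm, ?_⟩
    rcases h with ⟨h1, h2, h3⟩ | ⟨h1, h2, h3⟩ | h | h
    · exact Or.inl ⟨h2, h1, h3.symm⟩
    · exact Or.inr (Or.inl ⟨h2, h1, by rwa [Set.union_comm] at h3⟩)
    · exact Or.inr (Or.inr (Or.inr h))
    · exact Or.inr (Or.inr (Or.inl h))
  loopless := ⟨fun v h => h.1 rfl⟩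

/-- A witness of an edge `uv` of `G^s`: a vertex `w ∉ N_G[s]` such that for each end `x`,
`w` is adjacent to `x` in `G` iff `x ∉ N_G[s]`. -/
def EdgeWitness {V : Type*} (G : SimpleGraph V) (s u v w : V) : Prop :=
  w ∉ closedNbr G s ∧ (G.Adj w u ↔ u ∉ closedNbr G s) ∧ (G.Adj w v ↔ v ∉ closedNbr G s)

/-- An edge of `G^s` is collateral if it is an edge of `G` and one end is in `N_G[s]`. -/
def Collateral {V : Type*} (G : SimpleGraph V) (s u v : V) : Prop :=
  (auxGraph G s).Adj u v ∧ G.Adj u v ∧ (u ∈ closedNbr G s ∨ v ∈ closedNbr G s)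

/-- A witness of a clique `K` of `G^s`: a vertex `w ∉ N_G[s]` such that `N_G[w] ∩ K` and
`N_G[s] ∩ K` partition `K`. -/
def CliqueWitness {V : Type*} (G : SimpleGraph V) (s : V) (K : Set V) (w : V) : Prop :=
  w ∉ closedNbr G s ∧ ∀ x ∈ K, (x ∈ closedNbr G w ↔ x ∉ closedNbr G s)

/-- A graph is chordal if it has no induced cycle of length at least four. -/
def Chordal {V : Type*} (G : SimpleGraph V) : Prop :=
  ¬ ∃ (n : ℕ) (f : ZMod n → V), 4 ≤ n ∧ Function.Injective f ∧
      ∀ i j : ZMod n, G.Adj (f i) (f j) ↔ (j = i + 1 ∨ i = j + 1)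


private lemma noC4 {V : Type*} (G : SimpleGraph V) (hG : Chordal G) (a b c d : V)
    (hab : G.Adj a b) (hbc : G.Adj b c) (hcd : G.Adj c d) (hda : G.Adj d a)
    (hac : ¬ G.Adj a c) (hbd : ¬ G.Adj b d) (hac' : a ≠ c) (hbd' : b ≠ d) : False := by
  apply hG
  have key : ∀ i : ZMod 4, i = 0 ∨ i = 1 ∨ i = 2 ∨ i = 3 := by decide
  set f : ZMod 4 → V := fun i => if i = 0 then a else if i = 1 then b else if i = 2 then c else d
    with hf
  have e0 : f 0 = a := by simp [hf]
  have e1 : f 1 = b := by simp (config := {decide := true}) [hf]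
  have e2 : f 2 = c := by simp (config := {decide := true}) [hf]
  have e3 : f 3 = d := by simp (config := {decide := true}) [hf]
  have haa := G.loopless.irrefl a; have hbb := G.loopless.irrefl b
  have hcc := G.loopless.irrefl c; have hdd := G.loopless.irrefl d
  refine ⟨4, f, le_refl _, ?_, ?_⟩
  · intro i j h
    rcases key i with rfl|rfl|rfl|rfl <;> rcases key j with rfl|rfl|rfl|rfl <;>
      simp_all (config := {decide := true}) [hab.ne, hbc.ne, hcd.ne, hda.ne.symm,
        hab.ne', hbc.ne', hcd.ne', hda.ne]
  · intro i j
    rcases key i with rfl|rfl|rfl|rfl <;> rcases key j with rfl|rfl|rfl|rfl <;>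
      simp_all (config := {decide := true}) [G.adj_comm b a, G.adj_comm c b, G.adj_comm d c,
        G.adj_comm a d, G.adj_comm c a, G.adj_comm d b]

private lemma noC5 {V : Type*} (G : SimpleGraph V) (hG : Chordal G) (a b c d e : V)
    (hab : G.Adj a b) (hbc : G.Adj b c) (hcd : G.Adj c d) (hde : G.Adj d e) (hea : G.Adj e a)
    (hac : ¬ G.Adj a c) (had : ¬ G.Adj a d) (hbd : ¬ G.Adj b d) (hbe : ¬ G.Adj b e)
    (hce : ¬ G.Adj c e)
    (hac' : a ≠ c) (had' : a ≠ d) (hbd' : b ≠ d) (hbe' : b ≠ e) (hce' : c ≠ e) : False := by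
  apply hG
  have key : ∀ i : ZMod 5, i = 0 ∨ i = 1 ∨ i = 2 ∨ i = 3 ∨ i = 4 := by decide
  set f : ZMod 5 → V := fun i =>
    if i = 0 then a else if i = 1 then b else if i = 2 then c else if i = 3 then d else e
    with hf
  have e0 : f 0 = a := by simp [hf]
  have e1 : f 1 = b := by simp (config := {decide := true}) [hf]
  have e2 : f 2 = c := by simp (config := {decide := true}) [hf]
  have e3 : f 3 = d := by simp (config := {decide := true}) [hf]
  have e4 : f 4 = e := by simp (config := {decide := true}) [hf]
  have haa := G.loopless.irrefl a; have hbb := G.loopless.irrefl b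
  have hcc := G.loopless.irrefl c; have hdd := G.loopless.irrefl d; have hee := G.loopless.irrefl e
  refine ⟨5, f, by norm_num, ?_, ?_⟩
  · intro i j h
    rcases key i with rfl|rfl|rfl|rfl|rfl <;> rcases key j with rfl|rfl|rfl|rfl|rfl <;>
      simp_all (config := {decide := true}) [hab.ne, hbc.ne, hcd.ne, hde.ne, hea.ne,
        hab.ne', hbc.ne', hcd.ne', hde.ne', hea.ne']
  · intro i j
    rcases key i with rfl|rfl|rfl|rfl|rfl <;> rcases key j with rfl|rfl|rfl|rfl|rfl <;>
      simp_all (config := {decide := true}) [G.adj_comm b a, G.adj_comm c b, G.adj_comm d c,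
        G.adj_comm e d, G.adj_comm a e, G.adj_comm c a, G.adj_comm d a, G.adj_comm d b,
        G.adj_comm e b, G.adj_comm e c]

/-- If v₁ v₀ v₂ is a path of G^s whose edges v₀v₁ and v₀v₂ are collateral,
with either both or neither of v₁, v₂ in N_G(s), and no vertex witnesses both edges,
then no witness of v₀v₁ is adjacent in G to any witness of v₀v₂. -/
theorem stmt_7 {V : Type*} [Fintype V] (G : SimpleGraph V) (s v₀ v₁ v₂ : V)
    (hG : Chordal G) (hs : Simplicial G s)
    (h12 : v₁ ≠ v₂)
    (ha1 : (auxGraph G s).Adj v₀ v₁) (ha2 : (auxGraph G s).Adj v₀ v₂)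
    (hc1 : Collateral G s v₀ v₁) (hc2 : Collateral G s v₀ v₂)
    (hpar : v₁ ∈ G.neighborSet s ↔ v₂ ∈ G.neighborSet s)
    (hnocommon : ¬ ∃ w : V, EdgeWitness G s v₀ v₁ w ∧ EdgeWitness G s v₀ v₂ w) :
    ∀ w₁ w₂ : V, EdgeWitness G s v₀ v₁ w₁ → EdgeWitness G s v₀ v₂ w₂ →
      ¬ G.Adj w₁ w₂ := by
  intro w₁ w₂ hW₁ hW₂ hadj
  obtain ⟨hw₁s, hw₁0, hw₁1⟩ := hW₁
  obtain ⟨hw₂s, hw₂0, hw₂2⟩ := hW₂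
  have hns : ∀ w : V, w ∉ closedNbr G s → ¬ G.Adj w s := by
    intro w hw h
    exact hw (Set.mem_insert_iff.mpr (Or.inr h.symm))
  by_cases h1 : v₁ ∈ closedNbr G s <;> by_cases h2 : v₂ ∈ closedNbr G s
  · -- both ends in N[s]
    have hn1 : ¬ G.Adj w₁ v₁ := fun h => (hw₁1.mp h) h1
    have hn2 : ¬ G.Adj w₂ v₂ := fun h => (hw₂2.mp h) h2
    have hw₁v₂ : G.Adj w₁ v₂ := by
      by_contra hc
      exact hnocommon ⟨w₁, ⟨hw₁s, hw₁0, hw₁1⟩,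
        ⟨hw₁s, hw₁0, ⟨fun h => absurd h hc, fun h => absurd h2 h⟩⟩⟩
    have hw₂v₁ : G.Adj w₂ v₁ := by
      by_contra hc
      exact hnocommon ⟨w₂, ⟨hw₂s, hw₂0, ⟨fun h => absurd h hc, fun h => absurd h1 h⟩⟩,
        ⟨hw₂s, hw₂0, hw₂2⟩⟩
    have hvv : G.Adj v₁ v₂ := hs h1 h2 h12
    exact noC4 G hG v₁ w₂ w₁ v₂ hw₂v₁.symm hadj.symm hw₁v₂ hvv.symm
      (fun h => hn1 h.symm) hn2 (fun h => hw₁s (h ▸ h1)) (fun h => hw₂s (h.symm ▸ h2))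
  · -- v₁ ∈ N[s], v₂ ∉ N[s] : then v₁ = s and w₂ is a common witness
    have hv1s : v₁ = s := by
      rcases Set.mem_insert_iff.mp h1 with h | h
      · exact h
      · exact absurd (hpar.mp h) (fun hh => h2 (Set.mem_insert_iff.mpr (Or.inr hh)))
    exact hnocommon ⟨w₂, ⟨hw₂s, hw₂0,
      ⟨fun h => absurd (hv1s ▸ h) (hns w₂ hw₂s), fun h => absurd h1 h⟩⟩,
      ⟨hw₂s, hw₂0, hw₂2⟩⟩
  · -- v₁ ∉ N[s], v₂ ∈ N[s] : then v₂ = s and w₁ is a common witness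
    have hv2s : v₂ = s := by
      rcases Set.mem_insert_iff.mp h2 with h | h
      · exact h
      · exact absurd (hpar.mpr h) (fun hh => h1 (Set.mem_insert_iff.mpr (Or.inr hh)))
    exact hnocommon ⟨w₁, ⟨hw₁s, hw₁0, hw₁1⟩,
      ⟨hw₁s, hw₁0, ⟨fun h => absurd (hv2s ▸ h) (hns w₁ hw₁s), fun h => absurd h2 h⟩⟩⟩
  · -- both ends outside N[s]
    have hv0 : v₀ ∈ closedNbr G s := hc1.2.2.resolve_right h1
    have ha1' : G.Adj w₁ v₁ := hw₁1.mpr h1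
    have ha2' : G.Adj w₂ v₂ := hw₂2.mpr h2
    have hn10 : ¬ G.Adj w₁ v₀ := fun h => (hw₁0.mp h) hv0
    have hn20 : ¬ G.Adj w₂ v₀ := fun h => (hw₂0.mp h) hv0
    have hn12 : ¬ G.Adj w₁ v₂ := fun h =>
      hnocommon ⟨w₁, ⟨hw₁s, hw₁0, hw₁1⟩, ⟨hw₁s, hw₁0, iff_of_true h h2⟩⟩
    have hn21 : ¬ G.Adj w₂ v₁ := fun h =>
      hnocommon ⟨w₂, ⟨hw₂s, hw₂0, iff_of_true h h1⟩, ⟨hw₂s, hw₂0, hw₂2⟩⟩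
    have hne12 : v₁ ≠ w₂ := fun h => hn20 (h ▸ hc1.2.1.symm)
    have hne21 : v₂ ≠ w₁ := fun h => hn10 (h ▸ hc2.2.1.symm)
    by_cases hvv : G.Adj v₁ v₂
    · exact noC4 G hG v₁ w₁ w₂ v₂ ha1'.symm hadj ha2' hvv.symm
        (fun h => hn21 h.symm) hn12 hne12 (fun h => hne21 h.symm)
    · exact noC5 G hG v₀ v₁ w₁ w₂ v₂ hc1.2.1 ha1'.symm hadj ha2' hc2.2.1.symm
        (fun h => hn10 h.symm) (fun h => hn20 h.symm) (fun h => hn21 h.symm) hvv hn12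
        (fun h => hw₁s (h ▸ hv0)) (fun h => hw₂s (h ▸ hv0)) hne12 h12
        (fun h => hne21 h.symm)
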